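/- Legendre's relation: For 0 < r < 1, E(r)K'(r) + E'(r)K(r) - K(r)K'(r) = π/2, where K(r) = ∫₀^{π/2} (1 - r² sin²t)^{-1/2} dt, E(r) = ∫₀^{π/2} (1 - r² sin²t)^{1/2} dt, K'(r) = K(√(1-r²)), E'(r) = E(√(1-r²)). -/

import Mathlib

open Real intervalIntegral

/-- Complete elliptic integral of the first kind. -/
noncomputable def ellK (r : ℝ) : ℝ :=
  ∫ t in (0 : ℝ)..(π / 2), (1 - r ^ 2 * Real.sin t ^ 2) ^ (-(1 / 2) : ℝ)

/-- Complete elliptic integral of the second kind. -/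
noncomputable def ellE (r : ℝ) : ℝ :=
  ∫ t in (0 : ℝ)..(π / 2), (1 - r ^ 2 * Real.sin t ^ 2) ^ ((1 / 2) : ℝ)

namespace LegendreAux

open MeasureTheory Metric Filter

lemma X_pos {m : ℝ} (hm : m ^ 2 < 1) (t : ℝ) : 0 < 1 - m ^ 2 * Real.sin t ^ 2 := by
  nlinarith [sq_nonneg (Real.cos t), Real.sin_sq_add_cos_sq t, sq_nonneg m,
    sq_nonneg (m * Real.cos t)]

lemma sin_sq_le_one (t : ℝ) : Real.sin t ^ 2 ≤ 1 := by
  nlinarith [Real.sin_sq_add_cos_sq t, sq_nonneg (Real.cos t)]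

lemma X_le_one {m : ℝ} (t : ℝ) : 1 - m ^ 2 * Real.sin t ^ 2 ≤ 1 := by
  nlinarith [sq_nonneg (m * Real.sin t)]

lemma X_ge {m : ℝ} (t : ℝ) : 1 - m ^ 2 ≤ 1 - m ^ 2 * Real.sin t ^ 2 := by
  nlinarith [Real.sin_sq_add_cos_sq t, sq_nonneg (m * Real.cos t)]

lemma contX {m : ℝ} (hm : m ^ 2 < 1) (c : ℝ) :
    Continuous (fun t : ℝ => (1 - m ^ 2 * Real.sin t ^ 2) ^ c) := by
  apply Continuous.rpow_const
  · continuity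
  · intro t; left; exact ne_of_gt (X_pos hm t)

lemma intX {m : ℝ} (hm : m ^ 2 < 1) (c : ℝ) :
    IntervalIntegrable (fun t : ℝ => (1 - m ^ 2 * Real.sin t ^ 2) ^ c) volume 0 (π/2) :=
  (contX hm c).intervalIntegrable _ _

lemma pi2_pos : (0:ℝ) < π / 2 := by positivity

lemma ibound {f g : ℝ → ℝ} (hf : IntervalIntegrable f volume 0 (π/2))
    (hg : IntervalIntegrable g volume 0 (π/2))
    (h : ∀ t ∈ Set.Icc (0:ℝ) (π/2), f t ≤ g t) :
    (∫ t in (0:ℝ)..(π/2), f t) ≤ ∫ t in (0:ℝ)..(π/2), g t :=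
  intervalIntegral.integral_mono_on (le_of_lt pi2_pos) hf hg h

lemma int_const (c : ℝ) : (∫ _ in (0:ℝ)..(π/2), c) = π/2 * c := by
  simp [mul_comm]

/-! ### Bounds -/

lemma ellK_ge {m : ℝ} (hm : m ^ 2 < 1) : π/2 ≤ ellK m := by
  have := ibound (f := fun _ => (1:ℝ)) (intervalIntegrable_const) (intX hm (-(1/2)))
    (fun t _ => Real.one_le_rpow_of_pos_of_le_one_of_nonpos (X_pos hm t) (X_le_one t)
      (by norm_num))
  calc π/2 = ∫ _ in (0:ℝ)..(π/2), (1:ℝ) := by rw [int_const]; ring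
  _ ≤ _ := this

lemma ellK_le {m : ℝ} (hm : m ^ 2 < 1) : ellK m ≤ π/2 * (1 - m ^ 2) ^ (-(1/2) : ℝ) := by
  have := ibound (g := fun _ => (1 - m^2) ^ (-(1/2):ℝ)) (intX hm (-(1/2)))
    (intervalIntegrable_const)
    (fun t _ => Real.rpow_le_rpow_of_nonpos (by linarith) (X_ge t) (by norm_num))
  calc ellK m ≤ ∫ _ in (0:ℝ)..(π/2), (1 - m^2) ^ (-(1/2):ℝ) := this
  _ = _ := int_const _

lemma ellE_le {m : ℝ} (hm : m ^ 2 < 1) : ellE m ≤ π/2 := by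
  have := ibound (g := fun _ => (1:ℝ)) (intX hm (1/2)) (intervalIntegrable_const)
    (fun t _ => Real.rpow_le_one (le_of_lt (X_pos hm t)) (X_le_one t) (by norm_num))
  calc ellE m ≤ ∫ _ in (0:ℝ)..(π/2), (1:ℝ) := this
  _ = π/2 := by rw [int_const]; ring

lemma ellE_ge {m : ℝ} (hm : m ^ 2 < 1) : π/2 * (1 - m ^ 2) ^ ((1/2) : ℝ) ≤ ellE m := by
  have := ibound (f := fun _ => (1 - m^2) ^ ((1/2):ℝ)) (intervalIntegrable_const)
    (intX hm (1/2))
    (fun t _ => Real.rpow_le_rpow (by linarith) (X_ge t) (by norm_num))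
  calc π/2 * (1 - m ^ 2) ^ ((1/2) : ℝ) = ∫ _ in (0:ℝ)..(π/2), (1 - m^2) ^ ((1/2):ℝ) :=
        (int_const _).symm
  _ ≤ _ := this

lemma ellE_ge_one {m : ℝ} (hm : m ^ 2 < 1) : 1 ≤ ellE m := by
  have key : ∀ t ∈ Set.Icc (0:ℝ) (π/2),
      Real.cos t ≤ (1 - m ^ 2 * Real.sin t ^ 2) ^ ((1/2) : ℝ) := by
    intro t ht
    have hc : 0 ≤ Real.cos t := Real.cos_nonneg_of_mem_Icc ⟨by linarith [ht.1, pi2_pos], ht.2⟩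
    have h1 : Real.cos t ^ 2 ≤ 1 - m ^ 2 * Real.sin t ^ 2 := by
      nlinarith [Real.sin_sq_add_cos_sq t, sq_nonneg (m * Real.sin t)]
    calc Real.cos t = Real.sqrt (Real.cos t ^ 2) := by rw [Real.sqrt_sq hc]
    _ ≤ Real.sqrt (1 - m ^ 2 * Real.sin t ^ 2) := Real.sqrt_le_sqrt h1
    _ = _ := Real.sqrt_eq_rpow _
  have := ibound (f := fun t => Real.cos t) (Real.continuous_cos.intervalIntegrable _ _)
    (intX hm (1/2)) key
  calc (1:ℝ) = ∫ t in (0:ℝ)..(π/2), Real.cos t := by simp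
  _ ≤ _ := this

lemma ellE_le_add {m : ℝ} (hm : m ^ 2 < 1) : ellE m ≤ 1 + π/2 * Real.sqrt (1 - m ^ 2) := by
  set c := Real.sqrt (1 - m ^ 2) with hc
  have hc0 : 0 ≤ c := Real.sqrt_nonneg _
  have key : ∀ t ∈ Set.Icc (0:ℝ) (π/2),
      (1 - m ^ 2 * Real.sin t ^ 2) ^ ((1/2) : ℝ) ≤ Real.cos t + c := by
    intro t ht
    have hcos : 0 ≤ Real.cos t := Real.cos_nonneg_of_mem_Icc ⟨by linarith [ht.1, pi2_pos], ht.2⟩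
    have hc2 : c ^ 2 = 1 - m ^ 2 := Real.sq_sqrt (by linarith)
    have h1 : 1 - m ^ 2 * Real.sin t ^ 2 ≤ (Real.cos t + c) ^ 2 := by
      nlinarith [Real.sin_sq_add_cos_sq t, sq_nonneg (m * Real.cos t), mul_nonneg hcos hc0]
    calc (1 - m ^ 2 * Real.sin t ^ 2) ^ ((1/2) : ℝ)
        = Real.sqrt (1 - m ^ 2 * Real.sin t ^ 2) := (Real.sqrt_eq_rpow _).symm
    _ ≤ Real.sqrt ((Real.cos t + c) ^ 2) := Real.sqrt_le_sqrt h1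
    _ = Real.cos t + c := Real.sqrt_sq (by linarith)
  have := ibound (intX hm (1/2))
    ((Real.continuous_cos.add continuous_const).intervalIntegrable _ _) key
  calc ellE m ≤ ∫ t in (0:ℝ)..(π/2), (Real.cos t + c) := this
  _ = 1 + π/2 * c := by
      rw [intervalIntegral.integral_add (Real.continuous_cos.intervalIntegrable _ _)
        (intervalIntegrable_const)]
      simp [mul_comm]

lemma KE_diff_nonneg {m : ℝ} (hm : m ^ 2 < 1) : 0 ≤ ellK m - ellE m := by
  have hdiff : ∀ t : ℝ, ∀ _ : t ∈ Set.Icc (0:ℝ) (π/2),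
      (1 - m ^ 2 * Real.sin t ^ 2) ^ ((1/2) : ℝ)
        ≤ (1 - m ^ 2 * Real.sin t ^ 2) ^ (-(1/2) : ℝ) := by
    intro t _
    have hX := X_pos hm t
    calc (1 - m ^ 2 * Real.sin t ^ 2) ^ ((1/2) : ℝ) ≤ 1 ^ ((1/2) : ℝ) :=
      Real.rpow_le_rpow hX.le (X_le_one t) (by norm_num)
    _ = 1 := Real.one_rpow _
    _ ≤ _ := Real.one_le_rpow_of_pos_of_le_one_of_nonpos hX (X_le_one t) (by norm_num)
  have := ibound (intX hm (1/2)) (intX hm (-(1/2))) hdiff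
  unfold ellK ellE
  linarith

lemma KE_diff_le {m : ℝ} (hm : m ^ 2 < 1) :
    ellK m - ellE m ≤ π/2 * (m ^ 2 * (1 - m ^ 2) ^ (-(1/2) : ℝ)) := by
  have hdiff : ∀ t : ℝ,
      (1 - m ^ 2 * Real.sin t ^ 2) ^ (-(1/2) : ℝ) - (1 - m ^ 2 * Real.sin t ^ 2) ^ ((1/2) : ℝ)
      = m ^ 2 * Real.sin t ^ 2 * (1 - m ^ 2 * Real.sin t ^ 2) ^ (-(1/2) : ℝ) := by
    intro t
    have hXpos := X_pos hm t
    have h2 : (1 - m ^ 2 * Real.sin t ^ 2) ^ ((1/2) : ℝ)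
        = (1 - m ^ 2 * Real.sin t ^ 2) * (1 - m ^ 2 * Real.sin t ^ 2) ^ (-(1/2) : ℝ) := by
      have h := Real.rpow_add hXpos 1 (-(1/2))
      rw [Real.rpow_one, show (1:ℝ) + -(1/2) = 1/2 by norm_num] at h
      exact h
    rw [h2]; ring_nf
  have key : ∀ t ∈ Set.Icc (0:ℝ) (π/2),
      (1 - m ^ 2 * Real.sin t ^ 2) ^ (-(1/2) : ℝ) - (1 - m ^ 2 * Real.sin t ^ 2) ^ ((1/2) : ℝ)
        ≤ m ^ 2 * (1 - m ^ 2) ^ (-(1/2) : ℝ) := by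
    intro t _
    rw [hdiff t]
    have h1 : (1 - m ^ 2 * Real.sin t ^ 2) ^ (-(1/2) : ℝ) ≤ (1 - m ^ 2) ^ (-(1/2) : ℝ) :=
      Real.rpow_le_rpow_of_nonpos (by linarith) (X_ge t) (by norm_num)
    have h2 := sin_sq_le_one t
    have h3 : (0:ℝ) < (1 - m ^ 2 * Real.sin t ^ 2) ^ (-(1/2) : ℝ) :=
      Real.rpow_pos_of_pos (X_pos hm t) _
    nlinarith [mul_le_mul_of_nonneg_left h1 (sq_nonneg m),
      mul_le_mul_of_nonneg_right (mul_le_mul_of_nonneg_left h2 (sq_nonneg m)) h3.le]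
  have h := ibound (f := fun t => (1 - m ^ 2 * Real.sin t ^ 2) ^ (-(1/2) : ℝ)
      - (1 - m ^ 2 * Real.sin t ^ 2) ^ ((1/2) : ℝ))
    (g := fun _ => m ^ 2 * (1 - m ^ 2) ^ (-(1/2) : ℝ))
    ((intX hm (-(1/2))).sub (intX hm (1/2))) intervalIntegrable_const key
  rw [intervalIntegral.integral_sub (intX hm (-(1/2))) (intX hm (1/2))] at h
  unfold ellK ellE
  calc _ ≤ ∫ _ in (0:ℝ)..(π/2), m ^ 2 * (1 - m ^ 2) ^ (-(1/2) : ℝ) := h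
  _ = _ := by simp; ring

/-! ### Differentiation under the integral sign -/

lemma hasDerivAt_integrand {t x : ℝ} (c : ℝ) (hx : x ^ 2 < 1) :
    HasDerivAt (fun r : ℝ => (1 - r ^ 2 * Real.sin t ^ 2) ^ c)
      ((-(2 * x ^ 1 * Real.sin t ^ 2)) * c * (1 - x ^ 2 * Real.sin t ^ 2) ^ (c - 1)) x := by
  have hX := X_pos hx t
  have hb : HasDerivAt (fun r : ℝ => 1 - r ^ 2 * Real.sin t ^ 2)
      (-(2 * x ^ 1 * Real.sin t ^ 2)) x :=
    ((hasDerivAt_pow 2 x).mul_const (Real.sin t ^ 2)).const_sub 1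
  exact hb.rpow_const (Or.inl hX.ne')

lemma sq_lt_of_ball {r x : ℝ} (hr : r ∈ Set.Ioo (0:ℝ) 1)
    (hx : x ∈ ball r ((1 - r)/2)) : x ^ 2 < ((1+r)/2) ^ 2 := by
  rw [mem_ball, Real.dist_eq, abs_sub_lt_iff] at hx
  have h1 : |x| < (1+r)/2 := by
    rw [abs_lt]; constructor <;> nlinarith [hr.1, hr.2]
  calc x ^ 2 = |x| ^ 2 := (sq_abs x).symm
  _ < _ := by nlinarith [abs_nonneg x]

lemma sq_lt_one' {r : ℝ} (hr : r ∈ Set.Ioo (0:ℝ) 1) : ((1+r)/2) ^ 2 < 1 := by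
  obtain ⟨h0, h1⟩ := hr; nlinarith

/-- generic differentiation under the integral sign -/
lemma hasDerivAt_int (c : ℝ) (hc : c ≤ 1) {r : ℝ} (hr : r ∈ Set.Ioo (0:ℝ) 1) :
    HasDerivAt (fun m : ℝ => ∫ t in (0:ℝ)..(π/2), (1 - m ^ 2 * Real.sin t ^ 2) ^ c)
      (∫ t in (0:ℝ)..(π/2),
        (-(2 * r ^ 1 * Real.sin t ^ 2)) * c * (1 - r ^ 2 * Real.sin t ^ 2) ^ (c - 1)) r := by
  obtain ⟨hr0, hr1⟩ := hr
  have hr2 : r ^ 2 < 1 := by nlinarith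
  set ε := (1 - r)/2 with hε
  have hε_pos : 0 < ε := by rw [hε]; linarith
  set δ := 1 - ((1+r)/2) ^ 2 with hδ
  have hδ_pos : 0 < δ := by
    have := sq_lt_one' ⟨hr0, hr1⟩; rw [hδ]; linarith
  have hball : ∀ x ∈ ball r ε, x ^ 2 < 1 := fun x hx =>
    lt_trans (sq_lt_of_ball ⟨hr0, hr1⟩ hx) (sq_lt_one' ⟨hr0, hr1⟩)
  have hXδ : ∀ x ∈ ball r ε, ∀ t : ℝ, δ ≤ 1 - x ^ 2 * Real.sin t ^ 2 := by
    intro x hx t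
    have h1 := sq_lt_of_ball ⟨hr0, hr1⟩ hx
    have h3 : x ^ 2 * Real.sin t ^ 2 ≤ ((1+r)/2) ^ 2 := by
      nlinarith [sq_nonneg x, sq_nonneg (Real.sin t), sin_sq_le_one t]
    rw [hδ]; linarith
  have key := intervalIntegral.hasDerivAt_integral_of_dominated_loc_of_deriv_le
    (F := fun m t => (1 - m ^ 2 * Real.sin t ^ 2) ^ c)
    (F' := fun m t => (-(2 * m ^ 1 * Real.sin t ^ 2)) * c * (1 - m ^ 2 * Real.sin t ^ 2) ^ (c - 1))
    (x₀ := r) (a := 0) (b := π/2) (μ := volume)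
    (bound := fun _ => |c| * δ ^ (c - 1) * 2) (Metric.ball_mem_nhds r hε_pos)
    ?_ (intX hr2 c) ?_ ?_ ?_ ?_
  · exact key.2
  · filter_upwards [Metric.ball_mem_nhds r hε_pos] with x hx
    exact (contX (hball x hx) c).aestronglyMeasurable
  · apply Continuous.aestronglyMeasurable
    exact (((continuous_const.mul (Real.continuous_sin.pow 2)).neg.mul continuous_const).mul
      (contX hr2 (c-1)))
  · apply Filter.Eventually.of_forall
    intro t _ x hx
    beta_reduce
    have h1 : |x| ≤ 1 := by
      have := hball x hx; rw [← sq_abs] at this; nlinarith [abs_nonneg x]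
    have h3 : (0:ℝ) < (1 - x ^ 2 * Real.sin t ^ 2) ^ (c - 1) :=
      Real.rpow_pos_of_pos (X_pos (hball x hx) t) _
    have h4 : (1 - x ^ 2 * Real.sin t ^ 2) ^ (c - 1) ≤ δ ^ (c - 1) :=
      Real.rpow_le_rpow_of_nonpos hδ_pos (hXδ x hx t) (by linarith)
    have h5 : (0:ℝ) < δ ^ (c-1) := Real.rpow_pos_of_pos hδ_pos _
    rw [Real.norm_eq_abs, abs_mul, abs_mul, abs_neg, abs_mul, abs_mul]
    rw [abs_of_pos h3, abs_of_nonneg (sq_nonneg (Real.sin t)), pow_one,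
      abs_of_nonneg (by norm_num : (0:ℝ) ≤ 2)]
    have h2 := sin_sq_le_one t
    have h6 := abs_nonneg c
    have h7 := abs_nonneg x
    have h8 := sq_nonneg (Real.sin t)
    have h9 : |x| * Real.sin t ^ 2 ≤ 1 := by nlinarith
    have h10 : |c| * (1 - x ^ 2 * Real.sin t ^ 2) ^ (c - 1) ≤ |c| * δ ^ (c - 1) :=
      mul_le_mul_of_nonneg_left h4 h6
    nlinarith [mul_le_mul_of_nonneg_right h9 (mul_nonneg h6 h3.le), h10]
  · exact intervalIntegrable_const
  · apply Filter.Eventually.of_forall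
    intro t _ x hx
    exact hasDerivAt_integrand c (hball x hx)

/-! ### Integration by parts identity -/

noncomputable def gd (m t : ℝ) : ℝ :=
  (Real.cos t ^ 2 - Real.sin t ^ 2) * (1 - m ^ 2 * Real.sin t ^ 2) ^ (-(1/2) : ℝ)
    + m ^ 2 * Real.sin t ^ 2 * Real.cos t ^ 2 * (1 - m ^ 2 * Real.sin t ^ 2) ^ (-(3/2) : ℝ)

lemma gd_cont {m : ℝ} (hm : m ^ 2 < 1) : Continuous (gd m) := by
  unfold gd
  apply Continuous.add
  · exact ((Real.continuous_cos.pow 2).sub (Real.continuous_sin.pow 2)).mul (contX hm _)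
  · exact ((continuous_const.mul (Real.continuous_sin.pow 2)).mul
      (Real.continuous_cos.pow 2)).mul (contX hm _)

lemma g_hasDeriv {m : ℝ} (hm : m ^ 2 < 1) (t : ℝ) :
    HasDerivAt (fun u : ℝ => Real.sin u * Real.cos u * (1 - m ^ 2 * Real.sin u ^ 2) ^ (-(1/2) : ℝ))
      (gd m t) t := by
  have hX := X_pos hm t
  have h1 : HasDerivAt (fun u : ℝ => Real.sin u * Real.cos u)
      (Real.cos t * Real.cos t + Real.sin t * (-Real.sin t)) t :=
    (Real.hasDerivAt_sin t).mul (Real.hasDerivAt_cos t)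
  have h2 : HasDerivAt (fun u : ℝ => 1 - m ^ 2 * Real.sin u ^ 2)
      (-(m ^ 2 * (2 * Real.sin t ^ 1 * Real.cos t))) t :=
    (((Real.hasDerivAt_sin t).pow 2).const_mul (m ^ 2)).const_sub 1
  have h3 := h2.rpow_const (p := -(1/2)) (Or.inl hX.ne')
  have h4 := h1.mul h3
  refine h4.congr_deriv ?_
  unfold gd
  rw [show -(1/2) - 1 = (-(3/2) : ℝ) by norm_num]
  ring

lemma gd_integral_zero {m : ℝ} (hm : m ^ 2 < 1) :
    (∫ t in (0:ℝ)..(π/2), gd m t) = 0 := by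
  rw [intervalIntegral.integral_eq_sub_of_hasDerivAt
    (fun t _ => g_hasDeriv hm t) ((gd_cont hm).intervalIntegrable _ _)]
  simp

lemma X32_identity {m : ℝ} (hm : m ^ 2 < 1) :
    (1 - m ^ 2) * ∫ t in (0:ℝ)..(π/2), (1 - m ^ 2 * Real.sin t ^ 2) ^ (-(3/2) : ℝ)
      = ellE m := by
  have hpt : ∀ t : ℝ, (1 - m ^ 2) * (1 - m ^ 2 * Real.sin t ^ 2) ^ (-(3/2) : ℝ)
      = (1 - m ^ 2 * Real.sin t ^ 2) ^ ((1/2) : ℝ) - m ^ 2 * gd m t := by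
    intro t
    have hX := X_pos hm t
    have E1 : (1 - m ^ 2 * Real.sin t ^ 2) * (1 - m ^ 2 * Real.sin t ^ 2) ^ (-(3/2) : ℝ)
        = (1 - m ^ 2 * Real.sin t ^ 2) ^ (-(1/2) : ℝ) := by
      nth_rewrite 1 [← Real.rpow_one (1 - m ^ 2 * Real.sin t ^ 2)]
      rw [← Real.rpow_add hX]; norm_num
    have E2 : (1 - m ^ 2 * Real.sin t ^ 2) ^ 2 * (1 - m ^ 2 * Real.sin t ^ 2) ^ (-(3/2) : ℝ)
        = (1 - m ^ 2 * Real.sin t ^ 2) ^ ((1/2) : ℝ) := by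
      rw [← Real.rpow_natCast (1 - m ^ 2 * Real.sin t ^ 2) 2, ← Real.rpow_add hX]; norm_num
    have hco : Real.cos t ^ 2 = 1 - Real.sin t ^ 2 := by
      nlinarith [Real.sin_sq_add_cos_sq t]
    unfold gd
    rw [← E1, ← E2, hco]
    ring
  rw [← intervalIntegral.integral_const_mul]
  rw [intervalIntegral.integral_congr (g := fun t =>
    (1 - m ^ 2 * Real.sin t ^ 2) ^ ((1/2) : ℝ) - m ^ 2 * gd m t) (fun t _ => hpt t)]
  rw [intervalIntegral.integral_sub (intX hm _)
    (((gd_cont hm).intervalIntegrable _ _).const_mul _),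
    intervalIntegral.integral_const_mul, gd_integral_zero hm]
  unfold ellE
  ring

/-! ### Derivative formulas -/

lemma hasDerivAt_ellE {r : ℝ} (hr : r ∈ Set.Ioo (0:ℝ) 1) :
    HasDerivAt ellE ((ellE r - ellK r) / r) r := by
  have hr2 : r ^ 2 < 1 := by obtain ⟨h0, h1⟩ := hr; nlinarith
  have hr0 : r ≠ 0 := ne_of_gt hr.1
  have h := hasDerivAt_int (1/2) (by norm_num) hr
  have hval : (∫ t in (0:ℝ)..(π/2),
        (-(2 * r ^ 1 * Real.sin t ^ 2)) * (1/2)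
          * (1 - r ^ 2 * Real.sin t ^ 2) ^ ((1/2) - 1 : ℝ))
      = (ellE r - ellK r) / r := by
    have hcg : ∀ t ∈ Set.uIcc (0:ℝ) (π/2),
        (-(2 * r ^ 1 * Real.sin t ^ 2)) * (1/2)
            * (1 - r ^ 2 * Real.sin t ^ 2) ^ ((1/2) - 1 : ℝ)
          = (1/r) * ((1 - r ^ 2 * Real.sin t ^ 2) ^ ((1/2) : ℝ)
            - (1 - r ^ 2 * Real.sin t ^ 2) ^ (-(1/2) : ℝ)) := by
      intro t _
      have hX := X_pos hr2 t
      have h2 : (1 - r ^ 2 * Real.sin t ^ 2) ^ ((1/2) : ℝ)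
          = (1 - r ^ 2 * Real.sin t ^ 2) * (1 - r ^ 2 * Real.sin t ^ 2) ^ (-(1/2) : ℝ) := by
        have h := Real.rpow_add hX 1 (-(1/2))
        rw [Real.rpow_one, show (1:ℝ) + -(1/2) = 1/2 by norm_num] at h
        exact h
      rw [show ((1/2) - 1 : ℝ) = -(1/2) by norm_num, h2]
      field_simp
      ring
    rw [intervalIntegral.integral_congr hcg, intervalIntegral.integral_const_mul,
      intervalIntegral.integral_sub (intX hr2 (1/2)) (intX hr2 (-(1/2)))]
    unfold ellE ellK
    field_simp
  rw [hval] at h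
  exact h

lemma hasDerivAt_ellK {r : ℝ} (hr : r ∈ Set.Ioo (0:ℝ) 1) :
    HasDerivAt ellK ((ellE r - (1 - r ^ 2) * ellK r) / (r * (1 - r ^ 2))) r := by
  have hr2 : r ^ 2 < 1 := by obtain ⟨h0, h1⟩ := hr; nlinarith
  have hr0 : r ≠ 0 := ne_of_gt hr.1
  have hb0 : (1 - r ^ 2) ≠ 0 := by nlinarith
  have h := hasDerivAt_int (-(1/2)) (by norm_num) hr
  have hval : (∫ t in (0:ℝ)..(π/2),
        (-(2 * r ^ 1 * Real.sin t ^ 2)) * (-(1/2))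
          * (1 - r ^ 2 * Real.sin t ^ 2) ^ (-(1/2) - 1 : ℝ))
      = (ellE r - (1 - r ^ 2) * ellK r) / (r * (1 - r ^ 2)) := by
    have hcg : ∀ t ∈ Set.uIcc (0:ℝ) (π/2),
        (-(2 * r ^ 1 * Real.sin t ^ 2)) * (-(1/2))
            * (1 - r ^ 2 * Real.sin t ^ 2) ^ (-(1/2) - 1 : ℝ)
          = (1/r) * ((1 - r ^ 2 * Real.sin t ^ 2) ^ (-(3/2) : ℝ)
            - (1 - r ^ 2 * Real.sin t ^ 2) ^ (-(1/2) : ℝ)) := by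
      intro t _
      have hX := X_pos hr2 t
      have h2 : (1 - r ^ 2 * Real.sin t ^ 2) ^ (-(1/2) : ℝ)
          = (1 - r ^ 2 * Real.sin t ^ 2) * (1 - r ^ 2 * Real.sin t ^ 2) ^ (-(3/2) : ℝ) := by
        have h := Real.rpow_add hX 1 (-(3/2))
        rw [Real.rpow_one, show (1:ℝ) + -(3/2) = -(1/2) by norm_num] at h
        exact h
      rw [show (-(1/2) - 1 : ℝ) = -(3/2) by norm_num, h2]
      field_simp
      ring
    rw [intervalIntegral.integral_congr hcg, intervalIntegral.integral_const_mul,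
      intervalIntegral.integral_sub (intX hr2 (-(3/2))) (intX hr2 (-(1/2)))]
    have h32 : (∫ t in (0:ℝ)..(π/2), (1 - r ^ 2 * Real.sin t ^ 2) ^ (-(3/2) : ℝ))
        = ellE r / (1 - r ^ 2) := by
      have := X32_identity hr2
      field_simp
      linarith [this]
    rw [h32]
    unfold ellK
    field_simp
  rw [hval] at h
  exact h

/-! ### The complementary modulus -/

lemma comp_mem {r : ℝ} (hr : r ∈ Set.Ioo (0:ℝ) 1) :
    Real.sqrt (1 - r ^ 2) ∈ Set.Ioo (0:ℝ) 1 := by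
  obtain ⟨h0, h1⟩ := hr
  constructor
  · exact Real.sqrt_pos.mpr (by nlinarith)
  · have h2 := Real.sqrt_lt_sqrt (by nlinarith : (0:ℝ) ≤ 1 - r ^ 2) (by nlinarith : 1 - r ^ 2 < 1)
    rwa [Real.sqrt_one] at h2

lemma comp_sq {r : ℝ} (hr : r ∈ Set.Ioo (0:ℝ) 1) :
    Real.sqrt (1 - r ^ 2) ^ 2 = 1 - r ^ 2 := by
  obtain ⟨h0, h1⟩ := hr
  exact Real.sq_sqrt (by nlinarith)

lemma hasDerivAt_comp {r : ℝ} (hr : r ∈ Set.Ioo (0:ℝ) 1) :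
    HasDerivAt (fun x : ℝ => Real.sqrt (1 - x ^ 2))
      (-r / Real.sqrt (1 - r ^ 2)) r := by
  obtain ⟨h0, h1⟩ := hr
  have hne : (1 - r ^ 2) ≠ 0 := by nlinarith
  have hinner : HasDerivAt (fun x : ℝ => 1 - x ^ 2) (-(2 * r ^ 1)) r :=
    (hasDerivAt_pow 2 r).const_sub 1
  have h := (Real.hasDerivAt_sqrt hne).comp r hinner
  refine h.congr_deriv ?_
  have hpos : 0 < Real.sqrt (1 - r ^ 2) := Real.sqrt_pos.mpr (by nlinarith)
  field_simp

/-! ### L' = 0 -/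

noncomputable def LL (r : ℝ) : ℝ :=
  ellE r * ellK (Real.sqrt (1 - r ^ 2)) + ellE (Real.sqrt (1 - r ^ 2)) * ellK r -
    ellK r * ellK (Real.sqrt (1 - r ^ 2))

lemma hasDerivAt_LL_zero {r : ℝ} (hr : r ∈ Set.Ioo (0:ℝ) 1) :
    HasDerivAt LL 0 r := by
  obtain ⟨h0, h1⟩ := hr
  set m := Real.sqrt (1 - r ^ 2) with hmdef
  have hm := comp_mem ⟨h0, h1⟩
  have hm2 : m ^ 2 = 1 - r ^ 2 := comp_sq ⟨h0, h1⟩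
  have hm0 : m ≠ 0 := ne_of_gt hm.1
  have hr0 : r ≠ 0 := ne_of_gt h0
  have hb0 : (1 - r ^ 2) ≠ 0 := by nlinarith
  -- derivative of r ↦ ellK (√(1-r²))
  have hKc : HasDerivAt (fun x : ℝ => ellK (Real.sqrt (1 - x ^ 2)))
      (-((ellE m - r ^ 2 * ellK m) / (r * (1 - r ^ 2)))) r := by
    have hraw := (hasDerivAt_ellK hm).comp r (hasDerivAt_comp ⟨h0, h1⟩)
    rw [← hmdef, show (1 : ℝ) - m ^ 2 = r ^ 2 by rw [hm2]; ring] at hraw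
    refine hraw.congr_deriv ?_
    rw [div_mul_div_comm, show m * r ^ 2 * m = m ^ 2 * r ^ 2 by ring, hm2]
    field_simp
  -- derivative of r ↦ ellE (√(1-r²))
  have hEc : HasDerivAt (fun x : ℝ => ellE (Real.sqrt (1 - x ^ 2)))
      (-(r * (ellE m - ellK m) / (1 - r ^ 2))) r := by
    have hraw := (hasDerivAt_ellE hm).comp r (hasDerivAt_comp ⟨h0, h1⟩)
    rw [← hmdef] at hraw
    refine hraw.congr_deriv ?_
    rw [div_mul_div_comm, show m * m = m ^ 2 by ring, hm2]
    ring
  have hK := hasDerivAt_ellK ⟨h0, h1⟩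
  have hE := hasDerivAt_ellE ⟨h0, h1⟩
  have hL : HasDerivAt LL
      (((ellE r - ellK r) / r * ellK m + ellE r * (-((ellE m - r ^ 2 * ellK m) / (r * (1 - r ^ 2)))))
        + ((-(r * (ellE m - ellK m) / (1 - r ^ 2))) * ellK r
          + ellE m * ((ellE r - (1 - r ^ 2) * ellK r) / (r * (1 - r ^ 2))))
        - (((ellE r - (1 - r ^ 2) * ellK r) / (r * (1 - r ^ 2))) * ellK m
          + ellK r * (-((ellE m - r ^ 2 * ellK m) / (r * (1 - r ^ 2)))))) r := by
    have p1 := hE.mul hKc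
    have p2 := hEc.mul hK
    have p3 := hK.mul hKc
    exact ((p1.add p2).sub p3)
  refine hL.congr_deriv ?_
  field_simp
  ring

lemma mem_sq_lt {x : ℝ} (hx : x ∈ Set.Ioo (0:ℝ) 1) : x ^ 2 < 1 := by
  obtain ⟨h0, h1⟩ := hx; nlinarith

lemma LL_const {r s : ℝ} (hr : r ∈ Set.Ioo (0:ℝ) 1) (hs : s ∈ Set.Ioo (0:ℝ) 1)
    (hlt : s < r) : LL s = LL r := by
  have hcont : ContinuousOn LL (Set.Icc s r) := by
    intro x hx
    exact (hasDerivAt_LL_zero ⟨lt_of_lt_of_le hs.1 hx.1,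
      lt_of_le_of_lt hx.2 hr.2⟩).continuousAt.continuousWithinAt
  have hderiv : ∀ x ∈ Set.Ioo s r, HasDerivAt LL ((fun _ : ℝ => (0:ℝ)) x) x := by
    intro x hx
    exact hasDerivAt_LL_zero ⟨lt_trans hs.1 hx.1, lt_trans hx.2 hr.2⟩
  obtain ⟨c, _, hceq⟩ := exists_hasDerivAt_eq_slope LL (fun _ => (0:ℝ)) hlt hcont hderiv
  have hne : r - s ≠ 0 := sub_ne_zero.mpr (ne_of_gt hlt)
  have h : (LL r - LL s) / (r - s) = 0 := hceq.symm
  rw [div_eq_zero_iff] at h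
  rcases h with h | h
  · linarith
  · exact absurd h hne

lemma sq_rpow_neg_half {x : ℝ} (hx : 0 < x) : ((x ^ 2 : ℝ)) ^ (-(1/2) : ℝ) = x⁻¹ := by
  rw [← Real.rpow_natCast x 2, ← Real.rpow_mul hx.le]
  norm_num
  exact Real.rpow_neg_one x

lemma tendsto_ellK_zero : Filter.Tendsto ellK (nhdsWithin 0 (Set.Ioi 0)) (nhds (π/2)) := by
  have hmem : Set.Ioo (0:ℝ) 1 ∈ nhdsWithin (0:ℝ) (Set.Ioi 0) :=
    Ioo_mem_nhdsGT_of_mem ⟨le_refl 0, one_pos⟩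
  have hup : Filter.Tendsto (fun x : ℝ => π/2 * (1 - x ^ 2) ^ (-(1/2) : ℝ))
      (nhdsWithin 0 (Set.Ioi 0)) (nhds (π/2)) := by
    have hc : ContinuousAt (fun x : ℝ => π/2 * (1 - x ^ 2) ^ (-(1/2) : ℝ)) 0 := by
      apply ContinuousAt.mul continuousAt_const
      apply ContinuousAt.rpow_const
      · exact (continuous_const.sub (continuous_pow 2)).continuousAt
      · left; norm_num
    have hT : Filter.Tendsto (fun x : ℝ => π/2 * (1 - x ^ 2) ^ (-(1/2) : ℝ))
        (nhdsWithin 0 (Set.Ioi 0)) (nhds (π/2 * ((1:ℝ) - 0 ^ 2) ^ (-(1/2) : ℝ))) :=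
      hc.tendsto.mono_left nhdsWithin_le_nhds
    norm_num at hT
    exact hT
  apply tendsto_of_tendsto_of_tendsto_of_le_of_le' tendsto_const_nhds hup
  · filter_upwards [hmem] with x hx
    exact ellK_ge (mem_sq_lt hx)
  · filter_upwards [hmem] with x hx
    exact ellK_le (mem_sq_lt hx)

lemma tendsto_Ecomp : Filter.Tendsto (fun x : ℝ => ellE (Real.sqrt (1 - x ^ 2)))
    (nhdsWithin 0 (Set.Ioi 0)) (nhds 1) := by
  have hmem : Set.Ioo (0:ℝ) 1 ∈ nhdsWithin (0:ℝ) (Set.Ioi 0) :=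
    Ioo_mem_nhdsGT_of_mem ⟨le_refl 0, one_pos⟩
  have hup : Filter.Tendsto (fun x : ℝ => 1 + π/2 * x)
      (nhdsWithin 0 (Set.Ioi 0)) (nhds 1) := by
    have hc : ContinuousAt (fun x : ℝ => 1 + π/2 * x) 0 :=
      (continuous_const.add (continuous_const.mul continuous_id)).continuousAt
    have hT : Filter.Tendsto (fun x : ℝ => 1 + π/2 * x)
        (nhdsWithin 0 (Set.Ioi 0)) (nhds (1 + π/2 * 0)) :=
      hc.tendsto.mono_left nhdsWithin_le_nhds
    simpa using hT
  apply tendsto_of_tendsto_of_tendsto_of_le_of_le' tendsto_const_nhds hup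
  · filter_upwards [hmem] with x hx
    exact ellE_ge_one (by rw [comp_sq hx]; nlinarith [hx.1, hx.2])
  · filter_upwards [hmem] with x hx
    have h := ellE_le_add (m := Real.sqrt (1 - x ^ 2)) (by rw [comp_sq hx]; nlinarith [hx.1, hx.2])
    rw [comp_sq hx, show (1 - (1 - x ^ 2) : ℝ) = x ^ 2 by ring, Real.sqrt_sq hx.1.le] at h
    exact h

lemma tendsto_first : Filter.Tendsto
    (fun x : ℝ => ellK (Real.sqrt (1 - x ^ 2)) * (ellE x - ellK x))
    (nhdsWithin 0 (Set.Ioi 0)) (nhds 0) := by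
  have hmem : Set.Ioo (0:ℝ) 1 ∈ nhdsWithin (0:ℝ) (Set.Ioi 0) :=
    Ioo_mem_nhdsGT_of_mem ⟨le_refl 0, one_pos⟩
  set g : ℝ → ℝ := fun x => (π/2) ^ 2 * (x * (1 - x ^ 2) ^ (-(1/2) : ℝ)) with hg
  have hgt : Filter.Tendsto g (nhdsWithin 0 (Set.Ioi 0)) (nhds 0) := by
    have hc : ContinuousAt g 0 := by
      apply ContinuousAt.mul continuousAt_const
      apply ContinuousAt.mul continuousAt_id
      apply ContinuousAt.rpow_const
      · exact (continuous_const.sub (continuous_pow 2)).continuousAt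
      · left; norm_num
    have h0 : g 0 = 0 := by simp [hg]
    have hT : Filter.Tendsto g (nhdsWithin 0 (Set.Ioi 0)) (nhds (g 0)) :=
      hc.tendsto.mono_left nhdsWithin_le_nhds
    rw [h0] at hT
    exact hT
  have hbound : ∀ x ∈ Set.Ioo (0:ℝ) 1,
      ellK (Real.sqrt (1 - x ^ 2)) * (ellK x - ellE x) ≤ g x := by
    intro x hx
    have hx2 : x ^ 2 < 1 := mem_sq_lt hx
    have hm2 : Real.sqrt (1 - x ^ 2) ^ 2 = 1 - x ^ 2 := comp_sq hx
    have hKle : ellK (Real.sqrt (1 - x ^ 2)) ≤ π/2 * x⁻¹ := by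
      have h := ellK_le (m := Real.sqrt (1 - x ^ 2)) (by rw [hm2]; nlinarith [hx.1, hx.2])
      rw [hm2, show (1 - (1 - x ^ 2) : ℝ) = x ^ 2 by ring, sq_rpow_neg_half hx.1] at h
      exact h
    have hKnn : 0 ≤ ellK (Real.sqrt (1 - x ^ 2)) := by
      have := ellK_ge (m := Real.sqrt (1 - x ^ 2)) (by rw [hm2]; nlinarith [hx.1, hx.2])
      linarith [pi2_pos]
    have hDnn : 0 ≤ ellK x - ellE x := KE_diff_nonneg hx2
    have hDle : ellK x - ellE x ≤ π/2 * (x ^ 2 * (1 - x ^ 2) ^ (-(1/2) : ℝ)) := KE_diff_le hx2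
    have hprod := mul_le_mul hKle hDle hDnn (le_of_lt (mul_pos pi2_pos (inv_pos.mpr hx.1)))
    calc ellK (Real.sqrt (1 - x ^ 2)) * (ellK x - ellE x)
        ≤ π/2 * x⁻¹ * (π/2 * (x ^ 2 * (1 - x ^ 2) ^ (-(1/2) : ℝ))) := hprod
    _ = g x := by rw [hg]; field_simp [ne_of_gt hx.1]
  have hneg : Filter.Tendsto (fun x : ℝ => -g x) (nhdsWithin 0 (Set.Ioi 0)) (nhds 0) := by
    simpa using hgt.neg
  apply tendsto_of_tendsto_of_tendsto_of_le_of_le' hneg tendsto_const_nhds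
  · filter_upwards [hmem] with x hx
    have := hbound x hx
    nlinarith [this]
  · filter_upwards [hmem] with x hx
    have hx2 : x ^ 2 < 1 := mem_sq_lt hx
    have hm2 : Real.sqrt (1 - x ^ 2) ^ 2 = 1 - x ^ 2 := comp_sq hx
    have hKnn : 0 ≤ ellK (Real.sqrt (1 - x ^ 2)) := by
      have := ellK_ge (m := Real.sqrt (1 - x ^ 2)) (by rw [hm2]; nlinarith [hx.1, hx.2])
      linarith [pi2_pos]
    have hDnn : 0 ≤ ellK x - ellE x := KE_diff_nonneg hx2
    nlinarith [mul_nonneg hKnn hDnn]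

lemma tendsto_LL : Filter.Tendsto LL (nhdsWithin 0 (Set.Ioi 0)) (nhds (π/2)) := by
  have heq : ∀ x : ℝ, LL x = ellK (Real.sqrt (1 - x ^ 2)) * (ellE x - ellK x)
      + ellE (Real.sqrt (1 - x ^ 2)) * ellK x := by
    intro x; unfold LL; ring
  have h2 : Filter.Tendsto (fun x : ℝ => ellE (Real.sqrt (1 - x ^ 2)) * ellK x)
      (nhdsWithin 0 (Set.Ioi 0)) (nhds (1 * (π/2))) := tendsto_Ecomp.mul tendsto_ellK_zero
  have h := tendsto_first.add h2
  rw [zero_add, one_mul] at h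
  exact h.congr (fun x => (heq x).symm)

end LegendreAux

theorem legendre_relation (r : ℝ) (hr : r ∈ Set.Ioo (0 : ℝ) 1) :
    ellE r * ellK (Real.sqrt (1 - r ^ 2)) + ellE (Real.sqrt (1 - r ^ 2)) * ellK r -
      ellK r * ellK (Real.sqrt (1 - r ^ 2)) = π / 2 := by
  have hmem : Set.Ioo (0:ℝ) r ∈ nhdsWithin (0:ℝ) (Set.Ioi 0) :=
    Ioo_mem_nhdsGT_of_mem ⟨le_refl 0, hr.1⟩
  have hconst : Filter.Tendsto LegendreAux.LL (nhdsWithin 0 (Set.Ioi 0))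
      (nhds (LegendreAux.LL r)) := by
    apply Filter.Tendsto.congr' _ tendsto_const_nhds
    filter_upwards [hmem] with x hx
    exact (LegendreAux.LL_const hr ⟨hx.1, lt_trans hx.2 hr.2⟩ hx.2).symm
  have h := tendsto_nhds_unique hconst LegendreAux.tendsto_LL
  simpa [LegendreAux.LL] using h
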